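/- Let p ≥ 5 be prime and ω = (p+1)/2. Then ((1/2)_ω / (1)_ω)^3 ≡ p^3 · (-1)^{(p-1)/2} (mod p^4), where the left side is viewed as a p-adic integer (it equals p^3 times a p-adic unit). -/

import Mathlib

open Finset

lemma prod_half (n : ℕ) : (∏ i ∈ Finset.range n, ((1:ℚ)/2 + i)) =
    (Nat.factorial (2*n)) / (Nat.factorial n * 4^n) := by
  induction n with
  | zero => simp
  | succ n ih =>
    rw [Finset.prod_range_succ, ih]
    have h1 : 2*(n+1) = (2*n+1)+1 := by ring
    rw [h1, Nat.factorial_succ, Nat.factorial_succ, Nat.factorial_succ]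
    have h2 : (Nat.factorial n : ℚ) ≠ 0 := Nat.cast_ne_zero.mpr (Nat.factorial_ne_zero n)
    have h3 : (Nat.factorial (2*n) : ℚ) ≠ 0 := Nat.cast_ne_zero.mpr (Nat.factorial_ne_zero _)
    push_cast
    field_simp
    ring

lemma choose_sub_one (p : ℕ) (hp : p.Prime) (k : ℕ) (hk : k ≤ p - 1) :
    (((p-1).choose k : ℕ) : ZMod p) = (-1)^k := by
  induction k with
  | zero => simp
  | succ k ih =>
    have hp1 : 1 ≤ p := hp.one_lt.le
    have hpascal : p.choose (k+1) = (p-1).choose k + (p-1).choose (k+1) := by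
      have h := Nat.choose_succ_succ (p-1) k
      rw [Nat.succ_eq_add_one, Nat.succ_eq_add_one, show p - 1 + 1 = p by omega] at h
      exact h
    have hdvd : p ∣ p.choose (k+1) := hp.dvd_choose_self (by omega) (by omega)
    have h0 : ((p.choose (k+1) : ℕ) : ZMod p) = 0 :=
      (ZMod.natCast_eq_zero_iff _ _).mpr hdvd
    have ihh := ih (by omega)
    have := congrArg (Nat.cast : ℕ → ZMod p) hpascal
    push_cast at this
    rw [h0, ihh] at this
    have h6 : (((p-1).choose (k+1) : ℕ) : ZMod p) = -(-1)^k := by linear_combination -this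
    rw [h6, pow_succ]
    ring

theorem stmt10 (p : ℕ) (hp : p.Prime) (hp5 : 5 ≤ p) (ω : ℕ) (hω : ω = (p + 1) / 2)
    (lhs rhs : ℚ)
    (hlhs : lhs = ((∏ i ∈ Finset.range ω, ((1 : ℚ) / 2 + i)) / (Nat.factorial ω)) ^ 3)
    (hrhs : rhs = (p : ℚ) ^ 3 * (-1) ^ ((p - 1) / 2)) :
    lhs = rhs ∨ (4 : ℤ) ≤ padicValRat p (lhs - rhs) := by
  haveI : Fact p.Prime := ⟨hp⟩
  obtain ⟨m, hm⟩ : ∃ m, p = 2*m+1 := by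
    rcases hp.eq_two_or_odd' with h | ⟨m, h⟩
    · omega
    · exact ⟨m, h⟩
  have hm2 : 2 ≤ m := by omega
  have hωm : ω = m + 1 := by omega
  have hmm : (p - 1) / 2 = m := by omega
  -- the key natural number: c = choose p m / p
  have hdvd : p ∣ p.choose m := hp.dvd_choose_self (by omega) (by omega)
  obtain ⟨c, hc⟩ := hdvd
  -- choose identity : (2ω).choose ω = 2 * (p * c)
  have hsymm : p.choose (m+1) = p.choose m := by
    have : p - (m+1) = m := by omega
    rw [← Nat.choose_symm (by omega : m + 1 ≤ p), this]
  have hchoose2 : (2*ω).choose ω = 2 * (p * c) := by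
    have h1 : 2*ω = p + 1 := by omega
    have h2 : (p+1).choose (m+1) = p.choose m + p.choose (m+1) := Nat.choose_succ_succ p m
    rw [h1, hωm, h2, hsymm, ← hc]; ring
  -- c * (m+1) = (p-1).choose m  (in ℕ)
  have hkey : c * (m+1) = (p-1).choose m := by
    have e1 : p.choose m * Nat.factorial m * Nat.factorial (p - m) = Nat.factorial p :=
      Nat.choose_mul_factorial_mul_factorial (show m ≤ p by omega)
    have e2 : (p-1).choose m * Nat.factorial m * Nat.factorial ((p-1) - m) =
        Nat.factorial (p-1) :=
      Nat.choose_mul_factorial_mul_factorial (show m ≤ p - 1 by omega)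
    have hpm : p - m = m + 1 := by omega
    have hpm2 : (p-1) - m = m := by omega
    have hfp : Nat.factorial p = p * Nat.factorial (p-1) := by
      have : p = (p-1)+1 := by omega
      rw [this, Nat.factorial_succ, Nat.add_sub_cancel]
    rw [hpm, Nat.factorial_succ, hc] at e1
    rw [hpm2] at e2
    rw [hfp, ← e2] at e1
    have e3 : p * (c * (m+1) * (Nat.factorial m * Nat.factorial m)) =
        p * ((p-1).choose m * (Nat.factorial m * Nat.factorial m)) := by
      linarith [e1]
    have e4 := Nat.eq_of_mul_eq_mul_left (by omega : 0 < p) e3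
    exact Nat.eq_of_mul_eq_mul_right (Nat.mul_pos (Nat.factorial_pos m) (Nat.factorial_pos m)) e4
  -- ZMod p computation
  have hcm : ((c : ℕ) : ZMod p) * ((m : ZMod p) + 1) = (-1)^m := by
    have := congrArg (Nat.cast : ℕ → ZMod p) hkey
    push_cast at this
    rw [this]
    exact choose_sub_one p hp m (by omega)
  have h2m : (2 : ZMod p) * ((m : ZMod p) + 1) = 1 := by
    have : ((2*(m+1) : ℕ) : ZMod p) = ((p + 1 : ℕ) : ZMod p) := by congr 1; omega
    push_cast [ZMod.natCast_self] at this
    linear_combination this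
  have hfour : (4 : ZMod p)^(3*ω) = 64 := by
    have h4 : (4 : ZMod p) = 2^2 := by norm_num
    have h6 : 2*(3*ω) = 3*p + 3 := by omega
    rw [h4, ← pow_mul, h6, pow_add, pow_mul, ZMod.pow_card]
    norm_num
  have hcube : (2 * (c : ZMod p))^3 = (-1)^m * 4^(3*ω) := by
    have hcm3 : ((c : ZMod p) * ((m : ZMod p)+1))^3 = ((-1 : ZMod p)^m)^3 := by rw [hcm]
    have hsq : ((-1 : ZMod p)^m)^3 = (-1)^m := by
      have h1 : ((-1 : ZMod p)^m)^2 = 1 := by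
        rw [← pow_mul, mul_comm, pow_mul]; norm_num
      calc ((-1 : ZMod p)^m)^3 = ((-1)^m)^2 * (-1)^m := by ring
        _ = (-1)^m := by rw [h1, one_mul]
    rw [hfour]
    calc (2 * (c:ZMod p))^3 = (2*(c:ZMod p))^3 * ((2 : ZMod p) * ((m:ZMod p)+1))^3 := by
          rw [h2m]; ring
      _ = 64 * ((c:ZMod p)*((m:ZMod p)+1))^3 := by ring
      _ = 64 * (-1)^m := by rw [hcm3, hsq]
      _ = (-1)^m * 64 := by ring
  -- define N
  set N : ℤ := (2*c : ℤ)^3 - (-1)^m * 4^(3*ω) with hN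
  have hNdvd : (p : ℤ) ∣ N := by
    rw [← ZMod.intCast_zmod_eq_zero_iff_dvd, hN]
    push_cast
    linear_combination hcube
  -- lhs as explicit rational
  have hfac : (Nat.factorial ω : ℚ) ≠ 0 := Nat.cast_ne_zero.mpr (Nat.factorial_ne_zero ω)
  have h4pow : ((4:ℚ)^ω) ≠ 0 := by positivity
  have hcastch : ((2*ω).choose ω : ℚ) = (Nat.factorial (2*ω)) / (Nat.factorial ω * Nat.factorial ω) := by
    rw [Nat.cast_choose ℚ (by omega : ω ≤ 2*ω), show 2*ω - ω = ω by omega]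
  have hlhs' : lhs = ((2 * (p * c) : ℚ) / 4^ω)^3 := by
    rw [hlhs, prod_half ω]
    congr 1
    have h1 : (2 * ((p:ℚ) * c)) = ((2*ω).choose ω : ℚ) := by
      rw [hchoose2]; push_cast; ring
    rw [h1, hcastch, div_div, div_div, mul_right_comm]
  have hdiff : lhs - rhs = (p:ℚ)^3 * ((N : ℚ) / 4^(3*ω)) := by
    rw [hlhs', hrhs, hmm, hN]
    push_cast
    have h4pow3 : ((4:ℚ)^(3*ω)) ≠ 0 := by positivity
    field_simp
    ring
  by_cases hN0 : N = 0
  · left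
    have : lhs - rhs = 0 := by rw [hdiff, hN0]; simp
    linarith [this]
  · right
    rw [hdiff]
    have hp0 : (p:ℚ) ≠ 0 := Nat.cast_ne_zero.mpr (by omega)
    have hNq : (N : ℚ) ≠ 0 := Int.cast_ne_zero.mpr hN0
    have h4pow3 : ((4:ℚ)^(3*ω)) ≠ 0 := by positivity
    rw [padicValRat.mul (pow_ne_zero 3 hp0) (div_ne_zero hNq h4pow3),
        padicValRat.pow (p:ℚ), padicValRat.div hNq h4pow3,
        padicValRat.self hp.one_lt]
    have hval4 : padicValRat p ((4:ℚ)^(3*ω)) = 0 := by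
      rw [padicValRat.pow (4:ℚ)]
      have : (4:ℚ) = ((4:ℕ):ℚ) := by norm_num
      rw [this, padicValRat.of_nat]
      have : padicValNat p 4 = 0 := padicValNat.eq_zero_of_not_dvd (by
        intro h; have := Nat.le_of_dvd (by norm_num) h; omega)
      rw [this]; ring
    have hvalN : (1:ℤ) ≤ padicValRat p (N : ℚ) := by
      rw [padicValRat.of_int]
      have hdvdN : p ∣ N.natAbs := by
        have h := Int.natAbs_dvd_natAbs.mpr hNdvd
        simpa using h
      have : 1 ≤ padicValNat p N.natAbs :=
        one_le_padicValNat_of_dvd (Int.natAbs_ne_zero.mpr hN0) hdvdN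
      unfold padicValInt
      exact_mod_cast this
    rw [hval4]
    push_cast
    linarith [hvalN]
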